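/- Fix c > 0 and d > (27c)^{1/4}/4. Then the quartic polynomial Q(u) = 16·d·u³ − 9·u⁴ − c has exactly two positive real roots 0 < u₁ < u₂, and Q(u) > 0 for u ∈ (u₁, u₂). -/

import Mathlib

/-- For `c > 0` and `d > (27c)^{1/4}/4`, the quartic `Q(u) = 16·d·u³ − 9·u⁴ − c` has
exactly two positive real roots `0 < u₁ < u₂`, and `Q(u) > 0` on `(u₁, u₂)`. -/
theorem quartic_two_positive_roots (c d : ℝ) (hc : 0 < c)
    (hd : (27 * c) ^ ((1 : ℝ) / 4) / 4 < d) :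
    ∃ u₁ u₂ : ℝ, 0 < u₁ ∧ u₁ < u₂ ∧
      16 * d * u₁ ^ 3 - 9 * u₁ ^ 4 - c = 0 ∧
      16 * d * u₂ ^ 3 - 9 * u₂ ^ 4 - c = 0 ∧
      (∀ u : ℝ, 0 < u → 16 * d * u ^ 3 - 9 * u ^ 4 - c = 0 → u = u₁ ∨ u = u₂) ∧
      (∀ u ∈ Set.Ioo u₁ u₂, 0 < 16 * d * u ^ 3 - 9 * u ^ 4 - c) := by
  set f : ℝ → ℝ := fun u => 16 * d * u ^ 3 - 9 * u ^ 4 - c with hf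
  -- basic positivity
  have ha : (0 : ℝ) < (27 * c) ^ ((1 : ℝ) / 4) :=
    Real.rpow_pos_of_pos (by linarith) _
  have hdpos : 0 < d := lt_trans (by positivity) hd
  -- key inequality : 256 d^4 > 27 c
  have hkey : 27 * c < 256 * d ^ 4 := by
    have h4 : (27 * c) ^ ((1 : ℝ) / 4) < 4 * d := by linarith
    have hpow : ((27 * c) ^ ((1 : ℝ) / 4)) ^ (4 : ℕ) < (4 * d) ^ (4 : ℕ) :=
      pow_lt_pow_left₀ h4 ha.le (by norm_num)
    have heq : ((27 * c) ^ ((1 : ℝ) / 4)) ^ (4 : ℕ) = 27 * c := by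
      rw [← Real.rpow_natCast ((27 * c) ^ ((1 : ℝ) / 4)) 4,
        ← Real.rpow_mul (by linarith : (0:ℝ) ≤ 27 * c)]
      norm_num
    rw [heq] at hpow
    nlinarith [hpow]
  -- the critical point
  have hstar : 0 < 4 * d / 3 := by linarith
  have hfstar : 0 < f (4 * d / 3) := by
    simp only [hf]
    nlinarith [hkey]
  have hf0 : f 0 = -c := by simp [hf]
  have hfM : f (16 * d / 9) = -c := by simp only [hf]; ring
  -- derivative
  have hderiv : ∀ x : ℝ, HasDerivAt f (48 * d * x ^ 2 - 36 * x ^ 3) x := by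
    intro x
    have h1 : HasDerivAt (fun u : ℝ => 16 * d * u ^ 3) (16 * d * (3 * x ^ 2)) x := by
      simpa using (hasDerivAt_pow 3 x).const_mul (16 * d)
    have h2 : HasDerivAt (fun u : ℝ => 9 * u ^ 4) (9 * (4 * x ^ 3)) x := by
      simpa using (hasDerivAt_pow 4 x).const_mul 9
    have := (h1.sub h2).sub_const c
    refine this.congr_deriv ?_
    ring
  have hcont : Continuous f := by
    have : ∀ x, HasDerivAt f _ x := hderiv
    fun_prop
  -- strict mono on [0, 4d/3]
  have hmono : StrictMonoOn f (Set.Icc 0 (4 * d / 3)) := by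
    apply strictMonoOn_of_deriv_pos (convex_Icc _ _) hcont.continuousOn
    intro x hx
    rw [interior_Icc] at hx
    rw [(hderiv x).deriv]
    have h1 : 0 < x := hx.1
    have h2 : 0 < 4 * d - 3 * x := by have := hx.2; linarith
    nlinarith [mul_pos (mul_pos h1 h1) h2]
  -- strict anti on [4d/3, ∞)
  have hanti : StrictAntiOn f (Set.Ici (4 * d / 3)) := by
    apply strictAntiOn_of_deriv_neg (convex_Ici _) hcont.continuousOn
    intro x hx
    rw [interior_Ici] at hx
    rw [(hderiv x).deriv]
    have hx0 : 0 < x := lt_trans hstar hx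
    have h2 : 0 < 3 * x - 4 * d := by have := Set.mem_Ioi.mp hx; linarith
    nlinarith [mul_pos (mul_pos hx0 hx0) h2]
  -- root u₁ in (0, 4d/3)
  obtain ⟨u₁, hu₁mem, hu₁⟩ : ∃ u ∈ Set.Icc (0:ℝ) (4 * d / 3), f u = 0 := by
    have := intermediate_value_Icc hstar.le hcont.continuousOn
    have h0 : (0:ℝ) ∈ Set.Icc (f 0) (f (4 * d / 3)) := by
      constructor <;> [rw [hf0]; skip] <;> linarith
    exact this h0
  have hu₁pos : 0 < u₁ := by
    rcases hu₁mem.1.lt_or_eq with h | h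
    · exact h
    · exfalso; rw [← h] at hu₁; rw [hf0] at hu₁; linarith
  have hu₁lt : u₁ < 4 * d / 3 := by
    rcases hu₁mem.2.lt_or_eq with h | h
    · exact h
    · exfalso; rw [h] at hu₁; rw [hu₁] at hfstar; linarith
  -- root u₂ in (4d/3, 16d/9)
  have hMgt : 4 * d / 3 < 16 * d / 9 := by linarith
  obtain ⟨u₂, hu₂mem, hu₂⟩ : ∃ u ∈ Set.Icc (4 * d / 3) (16 * d / 9), f u = 0 := by
    have := intermediate_value_Icc' hMgt.le hcont.continuousOn
    have h0 : (0:ℝ) ∈ Set.Icc (f (16 * d / 9)) (f (4 * d / 3)) := by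
      constructor <;> [rw [hfM]; skip] <;> linarith
    exact this h0
  have hu₂gt : 4 * d / 3 < u₂ := by
    rcases hu₂mem.1.lt_or_eq with h | h
    · exact h
    · exfalso; rw [← h] at hu₂; rw [hu₂] at hfstar; linarith
  have hu₁u₂ : u₁ < u₂ := lt_trans hu₁lt hu₂gt
  refine ⟨u₁, u₂, hu₁pos, hu₁u₂, hu₁, hu₂, ?_, ?_⟩
  · -- uniqueness
    intro u hu hfu
    have hfu' : f u = 0 := hfu
    rcases le_or_gt u (4 * d / 3) with h | h
    · left
      exact hmono.injOn ⟨hu.le, h⟩ ⟨hu₁pos.le, hu₁lt.le⟩ (by rw [hfu', hu₁])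
    · right
      exact hanti.injOn (Set.mem_Ici.mpr h.le) (Set.mem_Ici.mpr hu₂gt.le)
        (by rw [hfu', hu₂])
  · -- positivity on (u₁, u₂)
    intro u hu
    rcases le_or_gt u (4 * d / 3) with h | h
    · have := hmono ⟨hu₁pos.le, hu₁lt.le⟩ ⟨le_trans hu₁pos.le hu.1.le, h⟩ hu.1
      rw [hu₁] at this
      exact this
    · have := hanti (Set.mem_Ici.mpr h.le) (Set.mem_Ici.mpr hu₂gt.le) hu.2
      rw [hu₂] at this
      exact this
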